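/- If q is odd, then every arc in the projective plane PG(2,q) has at most q+1 points. -/
import Mathlib

/-- The projective plane `PG(2,q)` over a field `K`. -/
abbrev PG2 (K : Type*) [Field K] := Projectivization K (Fin 3 → K)

/-- Three points of `PG(2,K)` are collinear iff their representative vectors are
linearly dependent. -/
def Collin3 {K : Type*} [Field K] (a b c : PG2 K) : Prop :=
  ¬ LinearIndependent K ![a.rep, b.rep, c.rep]

/-- A set of points is an arc if no three distinct points of it are collinear. -/
def IsArc {K : Type*} [Field K] (S : Set (PG2 K)) : Prop :=
  ∀ a ∈ S, ∀ b ∈ S, ∀ c ∈ S, a ≠ b → a ≠ c → b ≠ c → ¬ Collin3 a b c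

open Projectivization

section Aux

variable {K : Type*} [Field K] {V : Type*} [AddCommGroup V] [Module K V]

noncomputable def projUnitsEquiv [Nontrivial V] : Kˣ × Projectivization K V ≃ {v : V // v ≠ 0} := by
  apply Equiv.ofBijective (fun x => ⟨x.1 • x.2.rep, by
    simp [Units.smul_def, smul_eq_zero, Projectivization.rep_nonzero]⟩)
  constructor
  · rintro ⟨u, p⟩ ⟨u', p'⟩ h
    simp only [Subtype.mk.injEq] at h
    have hp : p = p' := by
      have h1 : p'.rep = (u'⁻¹ * u : Kˣ) • p.rep := by
        rw [mul_smul, h, inv_smul_smul]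
      have := Projectivization.mk_eq_mk_iff K p'.rep p.rep p'.rep_nonzero p.rep_nonzero
      rw [Projectivization.mk_rep, Projectivization.mk_rep] at this
      exact (this.2 ⟨_, h1.symm⟩).symm
    subst hp
    have hu : u = u' := by
      apply Units.ext
      have h2 : (↑u - ↑u' : K) • p.rep = 0 := by
        rw [sub_smul, ← Units.smul_def, ← Units.smul_def, h, sub_self]
      rcases smul_eq_zero.1 h2 with h3 | h3
      · exact sub_eq_zero.1 h3
      · exact absurd h3 p.rep_nonzero
    rw [hu]
  · rintro ⟨v, hv⟩
    obtain ⟨a, ha⟩ := Projectivization.exists_smul_eq_mk_rep K v hv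
    exact ⟨⟨a⁻¹, Projectivization.mk K v hv⟩, by simp [← ha]⟩

lemma card_proj_mul [Nontrivial V] [Fintype K] (hfin : Finite V) :
    Nat.card (Projectivization K V) * (Fintype.card K - 1) = Nat.card V - 1 := by
  have h := Nat.card_congr (@projUnitsEquiv K _ V _ _ _)
  rw [Nat.card_prod] at h
  have hu : Nat.card Kˣ = Fintype.card K - 1 := by
    rw [Nat.card_units, Nat.card_eq_fintype_card]
  have hv : Nat.card {v : V // v ≠ 0} = Nat.card V - 1 := by
    haveI := Fintype.ofFinite V
    classical
    rw [Nat.card_eq_fintype_card, Nat.card_eq_fintype_card]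
    rw [Fintype.card_subtype_compl (p := fun v : V => v = 0)]
    simp
  rw [hu, hv, mul_comm] at h
  rw [mul_comm] at h ⊢
  exact h

/-- Dependence of a triple, concretely. -/
lemma dep_iff (x y z : V) :
    ¬ LinearIndependent K ![x, y, z] ↔
      ∃ g : Fin 3 → K, g 0 • x + g 1 • y + g 2 • z = 0 ∧ ∃ i, g i ≠ 0 := by
  rw [Fintype.not_linearIndependent_iff]
  simp [Fin.sum_univ_three]

end Aux

section PG

variable {K : Type*} [Field K]

lemma eq_of_rep_smul {a b : PG2 K} {c : K} (h : a.rep = c • b.rep) : a = b := by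
  have := Projectivization.mk_eq_mk_iff' K a.rep b.rep a.rep_nonzero b.rep_nonzero
  rw [Projectivization.mk_rep, Projectivization.mk_rep] at this
  exact this.2 ⟨c, h.symm⟩

lemma rep_notin {a b : PG2 K} (h : b ≠ a) : b.rep ∉ (K ∙ a.rep) := by
  intro hmem
  obtain ⟨c, hc⟩ := Submodule.mem_span_singleton.1 hmem
  exact h (eq_of_rep_smul hc.symm)

lemma finrank_quot (p : PG2 K) :
    Module.finrank K ((Fin 3 → K) ⧸ (K ∙ p.rep)) = 2 := by
  have h := Submodule.finrank_quotient_add_finrank (K ∙ p.rep)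
  rw [finrank_span_singleton p.rep_nonzero, Module.finrank_fin_fun] at h
  omega

instance quot_nontrivial (p : PG2 K) : Nontrivial ((Fin 3 → K) ⧸ (K ∙ p.rep)) :=
  Module.nontrivial_of_finrank_pos (R := K) (by rw [finrank_quot]; norm_num)

open scoped Classical in
noncomputable def slp (p b : PG2 K) : Projectivization K ((Fin 3 → K) ⧸ (K ∙ p.rep)) :=
  if h : (Submodule.Quotient.mk b.rep : (Fin 3 → K) ⧸ (K ∙ p.rep)) = 0 then
    Classical.choice inferInstance
  else Projectivization.mk K _ h

lemma slp_eq_iff {p b c : PG2 K} (hb : b ≠ p) (hc : c ≠ p) :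
    slp p b = slp p c ↔ ∃ u : Kˣ, b.rep - (u : K) • c.rep ∈ (K ∙ p.rep) := by
  have hb' : (Submodule.Quotient.mk b.rep : (Fin 3 → K) ⧸ (K ∙ p.rep)) ≠ 0 := by
    rw [ne_eq, Submodule.Quotient.mk_eq_zero]; exact rep_notin hb
  have hc' : (Submodule.Quotient.mk c.rep : (Fin 3 → K) ⧸ (K ∙ p.rep)) ≠ 0 := by
    rw [ne_eq, Submodule.Quotient.mk_eq_zero]; exact rep_notin hc
  rw [slp, slp, dif_neg hb', dif_neg hc', Projectivization.mk_eq_mk_iff]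
  constructor
  · rintro ⟨u, hu⟩
    refine ⟨u, ?_⟩
    rw [← Submodule.Quotient.mk_eq_zero, Submodule.Quotient.mk_sub, sub_eq_zero,
      Submodule.Quotient.mk_smul, ← hu, Units.smul_def]
  · rintro ⟨u, hu⟩
    refine ⟨u, ?_⟩
    have h2 : (Submodule.Quotient.mk (b.rep - (u : K) • c.rep) :
        (Fin 3 → K) ⧸ (K ∙ p.rep)) = 0 := (Submodule.Quotient.mk_eq_zero _).2 hu
    rw [Submodule.Quotient.mk_sub, sub_eq_zero, Submodule.Quotient.mk_smul,
      ← Units.smul_def] at h2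
    exact h2.symm

lemma slp_collinear {p b c : PG2 K} (hb : b ≠ p) (hc : c ≠ p)
    (h : slp p b = slp p c) : Collin3 p b c := by
  obtain ⟨u, hu⟩ := (slp_eq_iff hb hc).1 h
  obtain ⟨t, ht⟩ := Submodule.mem_span_singleton.1 hu
  rw [Collin3, dep_iff]
  refine ⟨![t, -1, (u : K)], ?_, ⟨1, by norm_num⟩⟩
  simp only [Matrix.cons_val_zero, Matrix.cons_val_one, Matrix.head_cons,
    Matrix.cons_val_two, Matrix.tail_cons]
  rw [ht]
  module

end PG

section PG2Counting

variable {K : Type*} [Field K]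

instance projFinite {V : Type*} [AddCommGroup V] [Module K V] [Finite V] :
    Finite (Projectivization K V) :=
  Quotient.finite _

lemma slp_partner_rep {Q b b' : PG2 K} (hbQ : b ≠ Q) (hb'Q : b' ≠ Q)
    (h : slp Q b' = slp Q b) :
    ∃ u s : K, u ≠ 0 ∧ b'.rep = u • b.rep + s • Q.rep ∧ (b' ≠ b → s ≠ 0) := by
  obtain ⟨u, hu⟩ := (slp_eq_iff hb'Q hbQ).1 h
  obtain ⟨s, hs⟩ := Submodule.mem_span_singleton.1 hu
  have h3 := hs.symm
  rw [sub_eq_iff_eq_add] at h3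
  refine ⟨(u : K), s, u.ne_zero, by rw [h3]; module, ?_⟩
  intro hne hs0
  rw [hs0, zero_smul, zero_add] at h3
  exact hne (eq_of_rep_smul h3)

lemma fiber_dep {Q b b' b'' : PG2 K} (hbQ : b ≠ Q) (hb'Q : b' ≠ Q) (hb''Q : b'' ≠ Q)
    (h1 : slp Q b' = slp Q b) (h2 : slp Q b'' = slp Q b)
    (hb' : b' ≠ b) (_hb'' : b'' ≠ b) : Collin3 b b' b'' := by
  obtain ⟨u, s, hu, he, hs⟩ := slp_partner_rep hbQ hb'Q h1
  obtain ⟨u', s', hu', he', hs'⟩ := slp_partner_rep hbQ hb''Q h2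
  rw [Collin3, dep_iff]
  refine ⟨![s' * u - s * u', -s', s], ?_, ⟨2, by simpa using hs hb'⟩⟩
  simp only [Matrix.cons_val_zero, Matrix.cons_val_one, Matrix.head_cons,
    Matrix.cons_val_two, Matrix.tail_cons]
  rw [he, he']
  module

lemma nat_cube_aux {q : ℕ} (h : 2 ≤ q) : q ^ 3 - 1 = (q ^ 2 + q + 1) * (q - 1) := by
  obtain ⟨r, rfl⟩ : ∃ r, q = r + 1 := ⟨q - 1, by omega⟩
  apply Nat.sub_eq_of_eq_add
  simp only [Nat.add_sub_cancel]
  ring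

lemma nat_sq_aux {q : ℕ} (h : 2 ≤ q) : q ^ 2 - 1 = (q + 1) * (q - 1) := by
  obtain ⟨r, rfl⟩ : ∃ r, q = r + 1 := ⟨q - 1, by omega⟩
  apply Nat.sub_eq_of_eq_add
  simp only [Nat.add_sub_cancel]
  ring

variable [Fintype K]

lemma card_PG2 : Nat.card (PG2 K) = Fintype.card K ^ 2 + Fintype.card K + 1 := by
  classical
  have hq2 : 2 ≤ Fintype.card K := Fintype.one_lt_card
  have h := card_proj_mul (K := K) (V := Fin 3 → K) inferInstance
  have hV : Nat.card (Fin 3 → K) = Fintype.card K ^ 3 := by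
    rw [Nat.card_eq_fintype_card, Fintype.card_fun, Fintype.card_fin]
  rw [hV] at h
  apply Nat.eq_of_mul_eq_mul_right (show 0 < Fintype.card K - 1 by omega)
  rw [h, nat_cube_aux hq2]

lemma card_slopes (p : PG2 K) :
    Nat.card (Projectivization K ((Fin 3 → K) ⧸ (K ∙ p.rep))) = Fintype.card K + 1 := by
  classical
  have hq2 : 2 ≤ Fintype.card K := Fintype.one_lt_card
  haveI : Finite ((Fin 3 → K) ⧸ (K ∙ p.rep)) := Quotient.finite _
  have h := card_proj_mul (K := K) (V := (Fin 3 → K) ⧸ (K ∙ p.rep)) inferInstance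
  have hV : Nat.card ((Fin 3 → K) ⧸ (K ∙ p.rep)) = Fintype.card K ^ 2 := by
    haveI := Fintype.ofFinite ((Fin 3 → K) ⧸ (K ∙ p.rep))
    rw [Nat.card_eq_fintype_card, Module.card_eq_pow_finrank (K := K), finrank_quot]
  rw [hV] at h
  apply Nat.eq_of_mul_eq_mul_right (show 0 < Fintype.card K - 1 by omega)
  rw [h, nat_sq_aux hq2]

end PG2Counting

/-- If `q` is odd then every arc in `PG(2,q)` has at most `q + 1` points. -/
theorem stmt_4 (K : Type*) [Field K] [Fintype K] (hodd : Odd (Fintype.card K))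
    (S : Set (PG2 K)) (hS : IsArc S) :
    S.ncard ≤ Fintype.card K + 1 := by
  classical
  set q := Fintype.card K with hq
  have hq2 : 2 ≤ q := Fintype.one_lt_card
  have hfin : S.Finite := Set.toFinite S
  haveI : Finite (PG2 K) := Quotient.finite _
  -- injectivity of slopes at arc points
  have hinj : ∀ p ∈ S, Set.InjOn (slp p) (S \ {p}) := by
    intro p hp x hx y hy hxy
    by_contra hne
    exact hS p hp x hx.1 y hy.1 (Ne.symm hx.2) (Ne.symm hy.2) hne
      (slp_collinear hx.2 hy.2 hxy)
  have hb : ∀ p ∈ S, (S \ {p}).ncard ≤ q + 1 := by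
    intro p hp
    have h := Set.ncard_le_ncard_of_injOn (slp p) (fun a _ => Set.mem_univ _)
      (hinj p hp) Set.finite_univ
    rwa [Set.ncard_univ, card_slopes] at h
  have hcard : S.ncard ≤ q + 2 := by
    rcases Set.eq_empty_or_nonempty S with rfl | ⟨p, hp⟩
    · simp
    · have h1 := hb p hp
      have h2 := Set.ncard_diff_singleton_add_one hp hfin
      omega
  by_contra hcon
  have hSq : S.ncard = q + 2 := by omega
  -- a point off the arc
  have hQex : ∃ Q : PG2 K, Q ∉ S := by
    by_contra h
    push_neg at h
    have huniv : S = Set.univ := Set.eq_univ_of_forall h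
    rw [huniv, Set.ncard_univ, card_PG2] at hSq
    have hq2' : 2 ≤ Fintype.card K := hq ▸ hq2
    have hqq : 2 * 2 ≤ Fintype.card K * Fintype.card K := Nat.mul_le_mul hq2' hq2'
    rw [pow_two] at hSq
    omega
  obtain ⟨Q, hQS⟩ := hQex
  -- every arc point has a unique "partner" collinear with it and Q
  have hpart : ∀ b ∈ S, ∃ b', b' ∈ S ∧ b' ≠ b ∧ slp Q b' = slp Q b := by
    intro b hbS
    have hs1 : (S \ {b}).ncard = q + 1 := by
      have h2 := Set.ncard_diff_singleton_add_one hbS hfin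
      omega
    have himg : (slp b) '' (S \ {b}) = Set.univ := by
      apply Set.eq_of_subset_of_ncard_le (Set.subset_univ _) _ Set.finite_univ
      rw [Set.ncard_univ, card_slopes, Set.ncard_image_of_injOn (hinj b hbS), hs1]
    have hmem : slp b Q ∈ (slp b) '' (S \ {b}) := by rw [himg]; trivial
    obtain ⟨b', hb'mem, hslp⟩ := hmem
    have hbQ : b ≠ Q := fun h => hQS (h ▸ hbS)
    have hb'Q : b' ≠ Q := fun h => hQS (h ▸ hb'mem.1)
    have hb'b : b' ≠ b := hb'mem.2
    refine ⟨b', hb'mem.1, hb'b, ?_⟩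
    obtain ⟨u, hu⟩ := (slp_eq_iff hb'b (Ne.symm hbQ)).1 hslp
    obtain ⟨t, ht⟩ := Submodule.mem_span_singleton.1 hu
    have h5 := ht.symm
    rw [sub_eq_iff_eq_add] at h5
    have htne : t ≠ 0 := by
      intro h0
      rw [h0, zero_smul, zero_add] at h5
      exact hb'Q (eq_of_rep_smul h5)
    apply (slp_eq_iff hb'Q hbQ).2
    refine ⟨Units.mk0 t htne, ?_⟩
    have h6 : b'.rep - t • b.rep = (u : K) • Q.rep := by rw [h5]; module
    rw [Units.val_mk0, h6]
    exact Submodule.smul_mem _ _ (Submodule.mem_span_singleton_self _)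
  -- parity argument
  set T := hfin.toFinset with hT
  have hTcard : T.card = q + 2 := by
    rw [← Set.ncard_eq_toFinset_card S hfin, hSq]
  have key : T.card = ∑ l ∈ T.image (fun x => slp Q x),
      (T.filter (fun x => slp Q x = l)).card :=
    Finset.card_eq_sum_card_fiberwise (fun x hx => Finset.mem_image_of_mem _ hx)
  have hfib : ∀ l ∈ T.image (fun x => slp Q x),
      (T.filter (fun x => slp Q x = l)).card = 2 := by
    intro l hl
    obtain ⟨b, hbT, rfl⟩ := Finset.mem_image.1 hl
    have hbS : b ∈ S := (Set.Finite.mem_toFinset hfin).1 hbT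
    obtain ⟨b', hb'S, hne, hsl⟩ := hpart b hbS
    have hbQ : b ≠ Q := fun h => hQS (h ▸ hbS)
    have hb'Q : b' ≠ Q := fun h => hQS (h ▸ hb'S)
    have hset : T.filter (fun x => slp Q x = slp Q b) = {b, b'} := by
      ext x
      simp only [Finset.mem_filter, Set.Finite.mem_toFinset, Finset.mem_insert,
        Finset.mem_singleton, hT]
      constructor
      · rintro ⟨hxS, hx⟩
        by_contra hxx
        push_neg at hxx
        have hxQ : x ≠ Q := fun h => hQS (h ▸ hxS)
        exact hS b hbS b' hb'S x hxS (Ne.symm hne) (Ne.symm hxx.1) (Ne.symm hxx.2)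
          (fiber_dep hbQ hb'Q hxQ hsl hx hne hxx.1)
      · rintro (rfl | rfl)
        · exact ⟨hbS, rfl⟩
        · exact ⟨hb'S, hsl⟩
    rw [hset, Finset.card_pair (Ne.symm hne)]
  have heven : T.card = (T.image (fun x => slp Q x)).card * 2 := by
    rw [key, Finset.sum_congr rfl hfib, Finset.sum_const, smul_eq_mul]
  rw [hTcard] at heven
  rw [Nat.odd_iff] at hodd
  omega
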